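/- For an affine function h on an open k-simplex σ, the lower Euler integral equals (−1)^k inf_σ h and the upper Euler integral equals (−1)^k sup_σ h. -/

import Mathlib

set_option maxHeartbeats 2000000

open Classical Filter

private lemma sum_if_le_count (N : ℕ) (t : ℤ) (h0 : 0 ≤ t) (hN : t ≤ N) :
    ∑ j ∈ Finset.range N, (if t ≤ (j : ℤ) then (1 : ℤ) else 0) = N - t := by
  induction N with
  | zero =>
    simp only [Finset.range_zero, Finset.sum_empty, Nat.cast_zero]
    omega
  | succ N ih =>
    rw [Finset.sum_range_succ]
    by_cases h : t ≤ (N : ℤ)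
    · rw [ih h, if_pos h]
      push_cast
      ring
    · have ht : t = N + 1 := by push_cast at hN; omega
      rw [if_neg h, Finset.sum_eq_zero]
      · push_cast; omega
      · intro j hj
        rw [Finset.mem_range] at hj
        rw [if_neg (by push_cast; omega)]

private lemma sum_if_lt_count (N : ℕ) (t : ℤ) (h0 : 0 ≤ t) (hN : t ≤ N) :
    ∑ j ∈ Finset.range N, (if (j : ℤ) < t then (1 : ℤ) else 0) = t := by
  induction N with
  | zero =>
    simp only [Finset.range_zero, Finset.sum_empty]
    omega
  | succ N ih =>
    rw [Finset.sum_range_succ]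
    by_cases h : t ≤ (N : ℤ)
    · rw [ih h, if_neg (by omega)]
      ring
    · have ht : t = N + 1 := by push_cast at hN; omega
      have hall : ∀ j ∈ Finset.range N, (if (j : ℤ) < t then (1 : ℤ) else 0) = 1 := by
        intro j hj
        rw [Finset.mem_range] at hj
        rw [if_pos (by push_cast; omega)]
      rw [Finset.sum_congr rfl hall, if_pos (by omega), Finset.sum_const,
        Finset.card_range, nsmul_eq_mul, mul_one]
      omega

private lemma tendsto_floor_div (a : ℝ) :
    Tendsto (fun n : ℕ => ((⌊(n : ℝ) * a⌋ : ℤ) : ℝ) / n) atTop (nhds a) := by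
  have h1 : Tendsto (fun n : ℕ => a - 1 / (n : ℝ)) atTop (nhds a) := by
    simpa using tendsto_const_nhds.sub (tendsto_one_div_atTop_nhds_zero_nat : Tendsto (fun n : ℕ => 1 / (n : ℝ)) atTop (nhds 0))
  refine tendsto_of_tendsto_of_tendsto_of_le_of_le' h1 tendsto_const_nhds ?_ ?_
  · filter_upwards [eventually_ge_atTop 1] with n hn
    have hn' : (0 : ℝ) < n := by exact_mod_cast hn
    rw [le_div_iff₀ hn']
    have h1 := Int.lt_floor_add_one ((n : ℝ) * a)
    have h2 : (a - 1 / (n : ℝ)) * n = a * n - 1 := by field_simp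
    have h3 : (n : ℝ) * a = a * n := mul_comm _ _
    linarith
  · filter_upwards [eventually_ge_atTop 1] with n hn
    have hn' : (0 : ℝ) < n := by exact_mod_cast hn
    rw [div_le_iff₀ hn']
    have h1 := Int.floor_le ((n : ℝ) * a)
    have h3 : (n : ℝ) * a = a * n := mul_comm _ _
    linarith

private lemma tendsto_ceil_div (a : ℝ) :
    Tendsto (fun n : ℕ => ((⌈(n : ℝ) * a⌉ : ℤ) : ℝ) / n) atTop (nhds a) := by
  have h1 : Tendsto (fun n : ℕ => a + 1 / (n : ℝ)) atTop (nhds a) := by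
    simpa using tendsto_const_nhds.add (tendsto_one_div_atTop_nhds_zero_nat : Tendsto (fun n : ℕ => 1 / (n : ℝ)) atTop (nhds 0))
  refine tendsto_of_tendsto_of_tendsto_of_le_of_le' tendsto_const_nhds h1 ?_ ?_
  · filter_upwards [eventually_ge_atTop 1] with n hn
    have hn' : (0 : ℝ) < n := by exact_mod_cast hn
    rw [le_div_iff₀ hn']
    have h1 := Int.le_ceil ((n : ℝ) * a)
    have h3 : (n : ℝ) * a = a * n := mul_comm _ _
    linarith
  · filter_upwards [eventually_ge_atTop 1] with n hn
    have hn' : (0 : ℝ) < n := by exact_mod_cast hn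
    rw [div_le_iff₀ hn']
    have h1 := Int.ceil_lt_add_one ((n : ℝ) * a)
    have h2 : (a + 1 / (n : ℝ)) * n = a * n + 1 := by field_simp
    have h3 : (n : ℝ) * a = a * n := mul_comm _ _
    linarith

theorem affine_simplex_euler_integral (m k : ℕ)
    (v : Fin (k + 1) → (Fin m → ℝ)) (hv : AffineIndependent ℝ v)
    (σ : Set (Fin m → ℝ))
    (hσ : σ = {x | ∃ w : Fin (k + 1) → ℝ,
        (∀ i, 0 < w i) ∧ (∑ i, w i) = 1 ∧ (∑ i, w i • v i) = x})
    (f : (Fin m → ℝ) →ᵃ[ℝ] ℝ)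
    (χ : Set (Fin m → ℝ) → ℤ)
    (hempty : χ ∅ = 0)
    (hadd : ∀ S T : Set (Fin m → ℝ), Disjoint S T → χ (S ∪ T) = χ S + χ T)
    (hupper : ∀ c : ℝ, ({x ∈ σ | c < f x}).Nonempty → χ {x ∈ σ | c < f x} = (-1 : ℤ) ^ k)
    (hlower : ∀ c : ℝ, ({x ∈ σ | f x < c}).Nonempty → χ {x ∈ σ | f x < c} = (-1 : ℤ) ^ k)
    (I : ((Fin m → ℝ) → ℤ) → ℤ)
    (hIadd : ∀ g₁ g₂ : (Fin m → ℝ) → ℤ, I (g₁ + g₂) = I g₁ + I g₂)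
    (hIind : ∀ A : Set (Fin m → ℝ), I (A.indicator 1) = χ A) :
    Tendsto (fun n : ℕ => (I (fun x => if x ∈ σ then ⌊(n : ℝ) * f x⌋ else 0) : ℝ) / n)
      atTop (nhds ((-1 : ℝ) ^ k * sInf (f '' σ)))
    ∧ Tendsto (fun n : ℕ => (I (fun x => if x ∈ σ then ⌈(n : ℝ) * f x⌉ else 0) : ℝ) / n)
      atTop (nhds ((-1 : ℝ) ^ k * sSup (f '' σ))) := by
  classical
  set F : ((Fin m → ℝ) → ℤ) →+ ℤ := AddMonoidHom.mk' I hIadd with hFdef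
  have hF : ∀ g, I g = F g := fun _ => rfl
  have hFind : ∀ A : Set (Fin m → ℝ), F (A.indicator 1) = χ A := hIind
  -- affine map on convex combinations
  have key : ∀ w : Fin (k + 1) → ℝ, (∑ i, w i) = 1 →
      f (∑ i, w i • v i) = ∑ i, w i * f (v i) := by
    intro w hw
    have hd : (⇑f : (Fin m → ℝ) → ℝ) = ⇑f.linear + fun _ => f 0 := AffineMap.decomp f
    have hdy : ∀ y, f y = f.linear y + f 0 := fun y => by
      conv_lhs => rw [hd]
      rfl
    have hterm : ∀ i ∈ (Finset.univ : Finset (Fin (k + 1))),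
        w i * f (v i) = w i * f.linear (v i) + w i * f 0 := by
      intro i _
      rw [hdy (v i)]
      ring
    rw [hdy, map_sum, Finset.sum_congr rfl hterm, Finset.sum_add_distrib,
      ← Finset.sum_mul, hw, one_mul]
    congr 1
    refine Finset.sum_congr rfl fun i _ => ?_
    rw [map_smul, smul_eq_mul]
  -- σ is nonempty
  have hx0 : (∑ i, (((k : ℝ) + 1)⁻¹) • v i) ∈ σ := by
    rw [hσ]
    refine ⟨fun _ => ((k : ℝ) + 1)⁻¹, fun i => by positivity, ?_, rfl⟩
    rw [Finset.sum_const, Finset.card_univ, Fintype.card_fin, nsmul_eq_mul]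
    push_cast
    field_simp
  have hσne : σ.Nonempty := ⟨_, hx0⟩
  have hne : (f '' σ).Nonempty := hσne.image f
  -- boundedness
  set C : ℝ := ∑ i, |f (v i)| with hC
  have hboundC : ∀ y ∈ f '' σ, |y| ≤ C := by
    rintro y ⟨x, hx, rfl⟩
    rw [hσ] at hx
    obtain ⟨w, hwpos, hwsum, hwx⟩ := hx
    rw [← hwx, key w hwsum]
    refine (Finset.abs_sum_le_sum_abs _ _).trans ?_
    refine Finset.sum_le_sum fun i _ => ?_
    rw [abs_mul, abs_of_pos (hwpos i)]
    have hwle : w i ≤ 1 := by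
      rw [← hwsum]
      exact Finset.single_le_sum (fun j _ => (hwpos j).le) (Finset.mem_univ i)
    nlinarith [abs_nonneg (f (v i)), (hwpos i).le]
  have hbddA : BddAbove (f '' σ) := ⟨C, fun y hy => (abs_le.mp (hboundC y hy)).2⟩
  have hbddB : BddBelow (f '' σ) := ⟨-C, fun y hy => (abs_le.mp (hboundC y hy)).1⟩
  set a : ℝ := sInf (f '' σ) with ha
  set b : ℝ := sSup (f '' σ) with hb
  have hax : ∀ x ∈ σ, a ≤ f x := fun x hx => csInf_le hbddB ⟨x, hx, rfl⟩
  have hxb : ∀ x ∈ σ, f x ≤ b := fun x hx => le_csSup hbddA ⟨x, hx, rfl⟩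
  have hab : a ≤ b := by
    obtain ⟨x, hx⟩ := hσne
    exact (hax x hx).trans (hxb x hx)
  have hbC : b ≤ C := csSup_le hne fun y hy => (abs_le.mp (hboundC y hy)).2
  -- χ σ = (-1)^k
  have hχσ : χ σ = (-1 : ℤ) ^ k := by
    have hset : σ = {x ∈ σ | f x < C + 1} := by
      ext x
      simp only [Set.mem_sep_iff]
      exact ⟨fun hx => ⟨hx, lt_of_le_of_lt ((hxb x hx).trans hbC) (by linarith)⟩,
        fun h => h.1⟩
    rw [hset]
    exact hlower (C + 1) (by rw [← hset]; exact hσne)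
  -- main computation for each n ≥ 1
  have main : ∀ n : ℕ, 1 ≤ n →
      I (fun x => if x ∈ σ then ⌊(n : ℝ) * f x⌋ else 0) = (-1 : ℤ) ^ k * ⌊(n : ℝ) * a⌋
      ∧ I (fun x => if x ∈ σ then ⌈(n : ℝ) * f x⌉ else 0) = (-1 : ℤ) ^ k * ⌈(n : ℝ) * b⌉ := by
    intro n hn
    have hn' : (0 : ℝ) < n := by exact_mod_cast hn
    set L : ℤ := ⌊(n : ℝ) * a⌋ with hL
    set M : ℤ := ⌈(n : ℝ) * b⌉ with hM
    have hLM : L ≤ M := by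
      have h1 : (L : ℝ) ≤ (n : ℝ) * a := Int.floor_le _
      have h2 : (n : ℝ) * b ≤ (M : ℝ) := Int.le_ceil _
      have h3 : (n : ℝ) * a ≤ (n : ℝ) * b := by nlinarith
      exact_mod_cast h1.trans (h3.trans h2)
    set N : ℕ := (M - L).toNat with hNdef
    have hN : (N : ℤ) = M - L := Int.toNat_of_nonneg (by omega)
    have hfloor_ge : ∀ x ∈ σ, L ≤ ⌊(n : ℝ) * f x⌋ := by
      intro x hx
      apply Int.floor_le_floor
      nlinarith [hax x hx]
    have hfloor_le : ∀ x ∈ σ, ⌊(n : ℝ) * f x⌋ ≤ M := by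
      intro x hx
      have h1 : ((⌊(n : ℝ) * f x⌋ : ℤ) : ℝ) ≤ (n : ℝ) * f x := Int.floor_le _
      have h2 : (n : ℝ) * f x ≤ (n : ℝ) * b := by nlinarith [hxb x hx]
      have h3 : (n : ℝ) * b ≤ (M : ℝ) := Int.le_ceil _
      exact_mod_cast h1.trans (h2.trans h3)
    have hceil_ge : ∀ x ∈ σ, L ≤ ⌈(n : ℝ) * f x⌉ := by
      intro x hx
      have h1 : (L : ℝ) ≤ (n : ℝ) * a := Int.floor_le _
      have h2 : (n : ℝ) * a ≤ (n : ℝ) * f x := by nlinarith [hax x hx]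
      have h3 : (n : ℝ) * f x ≤ ((⌈(n : ℝ) * f x⌉ : ℤ) : ℝ) := Int.le_ceil _
      exact_mod_cast h1.trans (h2.trans h3)
    have hceil_le : ∀ x ∈ σ, ⌈(n : ℝ) * f x⌉ ≤ M := by
      intro x hx
      apply Int.ceil_le_ceil
      nlinarith [hxb x hx]
    constructor
    · -- floor case
      have hid : (fun x => if x ∈ σ then ⌊(n : ℝ) * f x⌋ else 0)
          + (∑ j ∈ Finset.range N,
              ({x ∈ σ | f x < ((L : ℝ) + j + 1) / n}).indicator (1 : (Fin m → ℝ) → ℤ))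
          = M • σ.indicator (1 : (Fin m → ℝ) → ℤ) := by
        funext x
        simp only [Pi.add_apply, Finset.sum_apply, Pi.smul_apply, smul_eq_mul]
        by_cases hx : x ∈ σ
        · rw [if_pos hx, Set.indicator_of_mem hx, Pi.one_apply, mul_one]
          have hterm : ∀ j ∈ Finset.range N,
              ({x ∈ σ | f x < ((L : ℝ) + j + 1) / n}).indicator (1 : (Fin m → ℝ) → ℤ) x
              = if ⌊(n : ℝ) * f x⌋ - L ≤ (j : ℤ) then 1 else 0 := by
            intro j _
            simp only [Set.indicator_apply, Pi.one_apply]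
            refine if_congr ?_ rfl rfl
            simp only [Set.mem_sep_iff]
            rw [lt_div_iff₀ hn', mul_comm (f x) (n : ℝ)]
            constructor
            · rintro ⟨-, h⟩
              have hfl : ⌊(n : ℝ) * f x⌋ < L + (j : ℤ) + 1 := by
                rw [Int.floor_lt]; push_cast; linarith
              omega
            · intro h
              refine ⟨hx, ?_⟩
              have hfl : ⌊(n : ℝ) * f x⌋ < L + (j : ℤ) + 1 := by omega
              rw [Int.floor_lt] at hfl
              push_cast at hfl ⊢
              linarith
          rw [Finset.sum_congr rfl hterm,
            sum_if_le_count N (⌊(n : ℝ) * f x⌋ - L)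
              (by have := hfloor_ge x hx; omega)
              (by have := hfloor_le x hx; omega)]
          omega
        · rw [if_neg hx, Set.indicator_of_notMem hx, mul_zero, zero_add]
          refine Finset.sum_eq_zero fun j _ => ?_
          exact Set.indicator_of_notMem (fun hmem => hx (Set.mem_sep_iff.mp hmem).1) _
      have hSne : ∀ j ∈ Finset.range N,
          χ {x ∈ σ | f x < ((L : ℝ) + j + 1) / n} = (-1 : ℤ) ^ k := by
        intro j _
        apply hlower
        have hgt : a < ((L : ℝ) + j + 1) / n := by
          rw [lt_div_iff₀ hn', mul_comm a (n : ℝ)]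
          have h1 := Int.lt_floor_add_one ((n : ℝ) * a)
          have hj : (0 : ℝ) ≤ (j : ℝ) := by positivity
          push_cast
          push_cast at h1
          linarith
        obtain ⟨y, ⟨x, hxσ, rfl⟩, hy⟩ := exists_lt_of_csInf_lt hne hgt
        exact ⟨x, hxσ, hy⟩
      have heq := congrArg F hid
      rw [map_add, map_sum, map_zsmul, hFind, hχσ] at heq
      have heq2 : ∀ j ∈ Finset.range N,
          F (({x ∈ σ | f x < ((L : ℝ) + j + 1) / n}).indicator (1 : (Fin m → ℝ) → ℤ))
          = (-1 : ℤ) ^ k := by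
        intro j hj
        rw [hFind, hSne j hj]
      rw [Finset.sum_congr rfl heq2, Finset.sum_const, Finset.card_range,
        nsmul_eq_mul, zsmul_eq_mul] at heq
      push_cast at heq
      have hFg : F (fun x => if x ∈ σ then ⌊(n : ℝ) * f x⌋ else 0)
          = M * (-1 : ℤ) ^ k - (N : ℤ) * (-1 : ℤ) ^ k := by linarith
      rw [hF, hFg, hN]
      ring
    · -- ceil case
      have hid : (fun x => if x ∈ σ then ⌈(n : ℝ) * f x⌉ else 0)
          = L • σ.indicator (1 : (Fin m → ℝ) → ℤ)
          + (∑ j ∈ Finset.range N,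
              ({x ∈ σ | ((L : ℝ) + j) / n < f x}).indicator (1 : (Fin m → ℝ) → ℤ)) := by
        funext x
        simp only [Pi.add_apply, Finset.sum_apply, Pi.smul_apply, smul_eq_mul]
        by_cases hx : x ∈ σ
        · rw [if_pos hx, Set.indicator_of_mem hx, Pi.one_apply, mul_one]
          have hterm : ∀ j ∈ Finset.range N,
              ({x ∈ σ | ((L : ℝ) + j) / n < f x}).indicator (1 : (Fin m → ℝ) → ℤ) x
              = if (j : ℤ) < ⌈(n : ℝ) * f x⌉ - L then 1 else 0 := by
            intro j _
            simp only [Set.indicator_apply, Pi.one_apply]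
            refine if_congr ?_ rfl rfl
            simp only [Set.mem_sep_iff]
            rw [div_lt_iff₀ hn', mul_comm _ (n : ℝ)]
            constructor
            · rintro ⟨-, h⟩
              have hcl : L + (j : ℤ) < ⌈(n : ℝ) * f x⌉ := by
                rw [Int.lt_ceil]; push_cast; linarith
              omega
            · intro h
              refine ⟨hx, ?_⟩
              have hcl : L + (j : ℤ) < ⌈(n : ℝ) * f x⌉ := by omega
              rw [Int.lt_ceil] at hcl
              push_cast at hcl ⊢
              linarith
          rw [Finset.sum_congr rfl hterm,
            sum_if_lt_count N (⌈(n : ℝ) * f x⌉ - L)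
              (by have := hceil_ge x hx; omega)
              (by have := hceil_le x hx; omega)]
          omega
        · rw [if_neg hx, Set.indicator_of_notMem hx, mul_zero, zero_add]
          symm
          refine Finset.sum_eq_zero fun j _ => ?_
          exact Set.indicator_of_notMem (fun hmem => hx (Set.mem_sep_iff.mp hmem).1) _
      have hUne : ∀ j ∈ Finset.range N,
          χ {x ∈ σ | ((L : ℝ) + j) / n < f x} = (-1 : ℤ) ^ k := by
        intro j hj
        apply hupper
        have hlt : ((L : ℝ) + j) / n < b := by
          rw [div_lt_iff₀ hn', mul_comm b (n : ℝ)]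
          have h1 : (M : ℝ) < (n : ℝ) * b + 1 := Int.ceil_lt_add_one _
          have hjN : (j : ℤ) < (N : ℤ) := by exact_mod_cast Finset.mem_range.mp hj
          have h2 : (L : ℤ) + j ≤ M - 1 := by omega
          have h2' : (L : ℝ) + (j : ℝ) ≤ (M : ℝ) - 1 := by exact_mod_cast h2
          linarith
        obtain ⟨y, ⟨x, hxσ, rfl⟩, hy⟩ := exists_lt_of_lt_csSup hne hlt
        exact ⟨x, hxσ, hy⟩
      have heq := congrArg F hid
      rw [map_add, map_sum, map_zsmul, hFind, hχσ] at heq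
      have heq2 : ∀ j ∈ Finset.range N,
          F (({x ∈ σ | ((L : ℝ) + j) / n < f x}).indicator (1 : (Fin m → ℝ) → ℤ))
          = (-1 : ℤ) ^ k := by
        intro j hj
        rw [hFind, hUne j hj]
      rw [Finset.sum_congr rfl heq2, Finset.sum_const, Finset.card_range,
        nsmul_eq_mul, zsmul_eq_mul] at heq
      push_cast at heq
      rw [hF, heq, hN]
      ring
  constructor
  · have heq : (fun n : ℕ => (I (fun x => if x ∈ σ then ⌊(n : ℝ) * f x⌋ else 0) : ℝ) / n)
        =ᶠ[atTop] fun n : ℕ => (-1 : ℝ) ^ k * (((⌊(n : ℝ) * a⌋ : ℤ) : ℝ) / n) := by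
      filter_upwards [eventually_ge_atTop 1] with n hn
      rw [(main n hn).1]
      push_cast
      ring
    exact Tendsto.congr' heq.symm (tendsto_const_nhds.mul (tendsto_floor_div a))
  · have heq : (fun n : ℕ => (I (fun x => if x ∈ σ then ⌈(n : ℝ) * f x⌉ else 0) : ℝ) / n)
        =ᶠ[atTop] fun n : ℕ => (-1 : ℝ) ^ k * (((⌈(n : ℝ) * b⌉ : ℤ) : ℝ) / n) := by
      filter_upwards [eventually_ge_atTop 1] with n hn
      rw [(main n hn).2]
      push_cast
      ring
    exact Tendsto.congr' heq.symm (tendsto_const_nhds.mul (tendsto_ceil_div b))
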